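/- Let X be a compact metric space and let F be a nonempty family of continuous real-valued functions on X such that -f ∈ F whenever f ∈ F. For a finite Borel measure μ on X define Φ(μ) = sup_{f ∈ F} ∫ f dμ ∈ [0, ∞]. Then the following are equivalent: (a) the only finite Borel measure μ on X with ∫ f dμ = 0 for every f ∈ F is the zero measure; (b) there is a monotone increasing function φ : [0,∞) → [0,∞) with φ(0) = 0 such that μ(X) ≤ φ(Φ(μ)) for every finite Borel measure μ on X with Φ(μ) < ∞; (c) there is a constant c < ∞ such that μ(X) ≤ c · Φ(μ) for every finite Borel measure μ on X. -/

import Mathlib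

open MeasureTheory Filter
open scoped ENNReal NNReal Topology

lemma sum_clamp (n : ℕ) (s : ℝ) (h0 : 0 ≤ s) (hn : s ≤ n) :
    ∑ i ∈ Finset.range n, min (max (s - i) 0) 1 = s := by
  induction n generalizing s with
  | zero => simp at hn ⊢; linarith
  | succ n ih =>
    rw [Finset.sum_range_succ']
    by_cases hs : s ≤ 1
    · have hz : ∀ i ∈ Finset.range n, min (max (s - ((i:ℕ)+1 : ℕ)) 0) 1 = 0 := by
        intro i _
        have : s - ((i:ℕ)+1 : ℕ) ≤ 0 := by push_cast; nlinarith [Nat.cast_nonneg (α := ℝ) i]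
        rw [max_eq_right this, min_eq_left zero_le_one]
      rw [Finset.sum_eq_zero hz, zero_add]
      simp only [Nat.cast_zero, sub_zero]
      rw [max_eq_left h0, min_eq_left hs]
    · push_neg at hs
      have h1 : ∑ i ∈ Finset.range n, min (max (s - ((i:ℕ)+1 : ℕ)) 0) 1
          = ∑ i ∈ Finset.range n, min (max ((s-1) - i) 0) 1 := by
        refine Finset.sum_congr rfl fun i _ => ?_
        push_cast; ring_nf
      rw [h1, ih (s-1) (by linarith) (by push_cast at hn ⊢; linarith)]
      simp only [Nat.cast_zero, sub_zero]
      rw [max_eq_left h0, min_eq_right hs.le]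
      ring

lemma riesz_lite {X : Type*} [MetricSpace X] [CompactSpace X]
    [MeasurableSpace X] [BorelSpace X] (L : C(X, ℝ) → ℝ)
    (hadd : ∀ f g, L (f + g) = L f + L g)
    (hsmul : ∀ (c : ℝ) (f), L (c • f) = c * L f)
    (hmono : ∀ f g : C(X, ℝ), (∀ x, f x ≤ g x) → L f ≤ L g)
    (hone : L (ContinuousMap.const X 1) = 1) :
    ∃ μ : Measure X, IsProbabilityMeasure μ ∧ ∀ f : C(X, ℝ), ∫ x, f x ∂μ ≤ L f := by
  classical
  have hzero : L 0 = 0 := by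
    have := hsmul 0 0
    simpa using this
  have hnonneg : ∀ f : C(X, ℝ), (∀ x, 0 ≤ f x) → 0 ≤ L f := by
    intro f hf
    have := hmono 0 f (by simpa using hf)
    simpa [hzero] using this
  have hconst : ∀ c : ℝ, L (ContinuousMap.const X c) = c := by
    intro c
    have h1 : ContinuousMap.const X c = c • ContinuousMap.const X 1 := by
      ext x; simp
    rw [h1, hsmul, hone, mul_one]
  -- the set of competitors for a compact set
  set S : Set X → Set ℝ :=
    fun K => L '' {f : C(X, ℝ) | (∀ x, 0 ≤ f x) ∧ ∀ x ∈ K, 1 ≤ f x} with hS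
  have hSne : ∀ K : Set X, (1:ℝ) ∈ S K := by
    intro K
    refine ⟨ContinuousMap.const X 1, ⟨fun x => by norm_num, fun x _ => by norm_num⟩, hone⟩
  have hSbdd : ∀ K : Set X, BddBelow (S K) := by
    intro K
    refine ⟨0, fun y hy => ?_⟩
    obtain ⟨f, hf, rfl⟩ := hy
    exact hnonneg f hf.1
  set lam : Set X → ℝ := fun K => sInf (S K) with hlam
  have lam_nonneg : ∀ K, 0 ≤ lam K := fun K =>
    le_csInf ⟨1, hSne K⟩ (fun y hy => by
      obtain ⟨f, hf, rfl⟩ := hy; exact hnonneg f hf.1)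
  have lam_le : ∀ (K : Set X) (f : C(X, ℝ)), (∀ x, 0 ≤ f x) → (∀ x ∈ K, 1 ≤ f x) →
      lam K ≤ L f := by
    intro K f h0 h1
    exact csInf_le (hSbdd K) ⟨f, ⟨h0, h1⟩, rfl⟩
  have lam_mono : ∀ K₁ K₂ : Set X, K₁ ⊆ K₂ → lam K₁ ≤ lam K₂ := by
    intro K₁ K₂ h
    refine le_csInf ⟨1, hSne K₂⟩ fun y hy => ?_
    obtain ⟨f, hf, rfl⟩ := hy
    exact lam_le K₁ f hf.1 fun x hx => hf.2 x (h hx)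
  -- subadditivity
  have lam_sup_le : ∀ K₁ K₂ : Set X, lam (K₁ ∪ K₂) ≤ lam K₁ + lam K₂ := by
    intro K₁ K₂
    refine le_of_forall_pos_le_add fun ε hε => ?_
    obtain ⟨y₁, hy₁, hy₁'⟩ := exists_lt_of_csInf_lt ⟨1, hSne K₁⟩
      (show lam K₁ < lam K₁ + ε/2 by linarith)
    obtain ⟨y₂, hy₂, hy₂'⟩ := exists_lt_of_csInf_lt ⟨1, hSne K₂⟩
      (show lam K₂ < lam K₂ + ε/2 by linarith)
    obtain ⟨f₁, hf₁, rfl⟩ := hy₁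
    obtain ⟨f₂, hf₂, rfl⟩ := hy₂
    have hcomp : lam (K₁ ∪ K₂) ≤ L (f₁ + f₂) := by
      refine lam_le _ _ (fun x => by
        have := hf₁.1 x; have := hf₂.1 x
        simp only [ContinuousMap.add_apply]; linarith) ?_
      intro x hx
      rcases hx with hx | hx
      · have := hf₁.2 x hx; have := hf₂.1 x
        simp only [ContinuousMap.add_apply]; linarith
      · have := hf₂.2 x hx; have := hf₁.1 x
        simp only [ContinuousMap.add_apply]; linarith
    rw [hadd] at hcomp
    linarith
  -- additivity on disjoint compacts
  have lam_sup_disj : ∀ K₁ K₂ : Set X, IsClosed K₁ → IsClosed K₂ → Disjoint K₁ K₂ →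
      lam K₁ + lam K₂ ≤ lam (K₁ ∪ K₂) := by
    intro K₁ K₂ hc₁ hc₂ hd
    obtain ⟨h, h0, h1, h01⟩ := exists_continuous_zero_one_of_isClosed hc₁ hc₂ hd
    refine le_csInf ⟨1, hSne _⟩ fun y hy => ?_
    obtain ⟨f, ⟨hf0, hf1⟩, rfl⟩ := hy
    set g₁ : C(X, ℝ) := f * (ContinuousMap.const X 1 - h) with hg₁
    set g₂ : C(X, ℝ) := f * h with hg₂
    have hgsum : g₁ + g₂ = f := by ext x; simp [hg₁, hg₂]; ring
    have hL1 : lam K₁ ≤ L g₁ := by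
      refine lam_le _ _ (fun x => ?_) (fun x hx => ?_)
      · have := (h01 x).2; have := hf0 x
        simp only [hg₁, ContinuousMap.mul_apply, ContinuousMap.sub_apply,
          ContinuousMap.const_apply]
        nlinarith
      · have hx0 : h x = 0 := h0 hx
        have := hf1 x (Or.inl hx)
        simp only [hg₁, ContinuousMap.mul_apply, ContinuousMap.sub_apply,
          ContinuousMap.const_apply, hx0]
        linarith
    have hL2 : lam K₂ ≤ L g₂ := by
      refine lam_le _ _ (fun x => ?_) (fun x hx => ?_)
      · have := (h01 x).1; have := hf0 x
        simp only [hg₂, ContinuousMap.mul_apply]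
        nlinarith
      · have hx1 : h x = 1 := h1 hx
        have := hf1 x (Or.inr hx)
        simp only [hg₂, ContinuousMap.mul_apply, hx1]
        linarith
    have : L g₁ + L g₂ = L f := by rw [← hadd, hgsum]
    linarith
  -- the content
  set Λ : Content X :=
    { toFun := fun K => Real.toNNReal (lam K)
      mono' := fun K₁ K₂ h => Real.toNNReal_mono (lam_mono _ _ h)
      sup_disjoint' := by
        intro K₁ K₂ hd hc₁ hc₂
        have h1 : lam ((K₁ ⊔ K₂ : TopologicalSpace.Compacts X) : Set X) = lam K₁ + lam K₂ := by
          rw [TopologicalSpace.Compacts.coe_sup]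
          exact le_antisymm (lam_sup_le _ _) (lam_sup_disj _ _ hc₁ hc₂ hd)
        rw [h1, Real.toNNReal_add (lam_nonneg _) (lam_nonneg _)]
      sup_le' := by
        intro K₁ K₂
        have h1 : lam ((K₁ ⊔ K₂ : TopologicalSpace.Compacts X) : Set X) ≤ lam K₁ + lam K₂ := by
          rw [TopologicalSpace.Compacts.coe_sup]; exact lam_sup_le _ _
        calc Real.toNNReal (lam ((K₁ ⊔ K₂ : TopologicalSpace.Compacts X) : Set X))
            ≤ Real.toNNReal (lam K₁ + lam K₂) := Real.toNNReal_mono h1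
          _ = Real.toNNReal (lam K₁) + Real.toNNReal (lam K₂) :=
              Real.toNNReal_add (lam_nonneg _) (lam_nonneg _) } with hΛ
  set μ : Measure X := Λ.measure with hμ
  have hcoe : ∀ K : TopologicalSpace.Compacts X, (Λ K : ℝ≥0∞) = ENNReal.ofReal (lam K) := by
    intro K
    simp only [hΛ]
    rw [ENNReal.ofReal]
    rfl
  -- the measure of open sets
  have hopen : ∀ (U : Set X) (hU : IsOpen U) (f : C(X, ℝ)), (∀ x, 0 ≤ f x) →
      (∀ x ∈ U, 1 ≤ f x) → μ U ≤ ENNReal.ofReal (L f) := by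
    intro U hU f h0 h1
    rw [hμ, Content.measure_apply _ hU.measurableSet,
      Λ.outerMeasure_of_isOpen U hU]
    refine iSup₂_le fun K hK => ?_
    rw [hcoe]
    exact ENNReal.ofReal_le_ofReal (lam_le _ f h0 fun x hx => h1 x (hK hx))
  -- total mass is 1
  have huniv : μ Set.univ = 1 := by
    have h1 : lam Set.univ = 1 := by
      refine le_antisymm (lam_le _ (ContinuousMap.const X 1) (fun x => by norm_num)
        (fun x _ => by norm_num) |>.trans_eq hone) ?_
      refine le_csInf ⟨1, hSne _⟩ fun y hy => ?_
      obtain ⟨f, ⟨hf0, hf1⟩, rfl⟩ := hy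
      calc (1:ℝ) = L (ContinuousMap.const X 1) := hone.symm
        _ ≤ L f := hmono _ _ fun x => by simpa using hf1 x trivial
    rw [hμ, Content.measure_apply _ MeasurableSet.univ,
      Λ.outerMeasure_of_isOpen Set.univ isOpen_univ,
      Content.innerContent_of_isCompact Λ isCompact_univ]
    show (Λ ⟨Set.univ, isCompact_univ⟩ : ℝ≥0∞) = 1
    rw [hcoe]
    simp [h1]
  have hprob : IsProbabilityMeasure μ := ⟨huniv⟩
  refine ⟨μ, hprob, ?_⟩
  have hint : ∀ f : C(X, ℝ), Integrable (fun x => f x) μ := fun f =>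
    (BoundedContinuousFunction.mkOfCompact f).integrable μ
  -- Step 1: functions with values in [0,1]
  have step1 : ∀ g : C(X, ℝ), (∀ x, 0 ≤ g x) → (∀ x, g x ≤ 1) → ∫ x, g x ∂μ ≤ L g := by
    intro g hg0 hg1
    refine le_of_forall_pos_le_add fun ε hε => ?_
    obtain ⟨m, hm⟩ := exists_nat_one_div_lt hε
    set n : ℕ := m + 1 with hn
    set q : ℕ → C(X, ℝ) := fun i =>
      ⟨fun x => min (max ((n:ℝ) * g x - i) 0) 1,
        (((continuous_const.mul g.continuous).sub continuous_const).max continuous_const).min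
          continuous_const⟩ with hq
    have hq_app : ∀ i x, q i x = min (max ((n:ℝ) * g x - i) 0) 1 := fun i x => rfl
    have hqsum : ∀ x, ∑ i ∈ Finset.range n, q i x = (n:ℝ) * g x := by
      intro x
      simp only [hq_app]
      exact sum_clamp n ((n:ℝ) * g x) (mul_nonneg (Nat.cast_nonneg n) (hg0 x))
        (mul_le_of_le_one_right (Nat.cast_nonneg n) (hg1 x))
    have hq0 : ∀ i x, 0 ≤ q i x := fun i x =>
      le_min (le_max_right _ _) zero_le_one
    have hq1 : ∀ i x, q i x ≤ 1 := fun i x => min_le_right _ _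
    set W : ℕ → Set X := fun i => {x | (i:ℝ) < (n:ℝ) * g x} with hW
    have hWopen : ∀ i, IsOpen (W i) :=
      fun i => isOpen_lt continuous_const (continuous_const.mul g.continuous)
    have hqind : ∀ i x, q i x ≤ (W i).indicator (fun _ => (1:ℝ)) x := by
      intro i x
      by_cases hx : x ∈ W i
      · rw [Set.indicator_of_mem hx]; exact hq1 i x
      · rw [Set.indicator_of_notMem hx]
        have hle : (n:ℝ) * g x - i ≤ 0 := by
          simp only [hW, Set.mem_setOf_eq, not_lt] at hx; linarith
        rw [hq_app, max_eq_right hle, min_eq_left zero_le_one]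
    have hWbound : ∀ i, μ (W (i+1)) ≤ ENNReal.ofReal (L (q i)) := by
      intro i
      refine hopen _ (hWopen _) (q i) (hq0 i) fun x hx => ?_
      have h1x : (1:ℝ) ≤ (n:ℝ) * g x - i := by
        simp only [hW, Set.mem_setOf_eq] at hx; push_cast at hx ⊢; linarith
      rw [hq_app]
      exact le_min (le_trans h1x (le_max_left _ _)) le_rfl
    have hqint : ∀ i, ∫ x, q i x ∂μ ≤ (μ (W i)).toReal := by
      intro i
      calc ∫ x, q i x ∂μ
          ≤ ∫ x, (W i).indicator (fun _ => (1:ℝ)) x ∂μ :=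
            integral_mono (hint (q i))
              ((integrable_const (1:ℝ)).indicator (hWopen i).measurableSet) (hqind i)
        _ = (μ (W i)).toReal • 1 := integral_indicator_const 1 (hWopen i).measurableSet
        _ = (μ (W i)).toReal := by rw [smul_eq_mul, mul_one]
    have hsum_int : ∑ i ∈ Finset.range n, ∫ x, q i x ∂μ = (n:ℝ) * ∫ x, g x ∂μ := by
      rw [← integral_finset_sum _ (fun i _ => hint (q i)),
        integral_congr_ae (Filter.Eventually.of_forall fun x => hqsum x),
        integral_const_mul]
    have hLsum : ∑ i ∈ Finset.range n, L (q i) = (n:ℝ) * L g := by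
      have h1 : (∑ i ∈ Finset.range n, q i) = (n:ℝ) • g := by
        ext x
        rw [ContinuousMap.sum_apply]
        simpa using hqsum x
      have h2 : ∀ s : Finset ℕ, L (∑ i ∈ s, q i) = ∑ i ∈ s, L (q i) := by
        intro s
        induction s using Finset.induction with
        | empty => simpa using hzero
        | insert _ _ hx ih => rw [Finset.sum_insert hx, hadd, ih, Finset.sum_insert hx]
      rw [← h2, h1, hsmul]
    have hbound : (n:ℝ) * ∫ x, g x ∂μ ≤ 1 + (n:ℝ) * L g := by
      rw [← hsum_int, ← hLsum]
      calc ∑ i ∈ Finset.range n, ∫ x, q i x ∂μ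
          ≤ ∑ i ∈ Finset.range n, (μ (W i)).toReal :=
            Finset.sum_le_sum fun i _ => hqint i
        _ = (∑ i ∈ Finset.range m, (μ (W (i+1))).toReal) + (μ (W 0)).toReal :=
            Finset.sum_range_succ' _ m
        _ ≤ (∑ i ∈ Finset.range m, L (q i)) + 1 := by
            refine add_le_add (Finset.sum_le_sum fun i _ =>
              ENNReal.toReal_le_of_le_ofReal (hnonneg _ (hq0 i)) (hWbound i)) ?_
            calc (μ (W 0)).toReal ≤ (1 : ℝ≥0∞).toReal :=
                  ENNReal.toReal_mono (by simp) prob_le_one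
              _ = 1 := by simp
        _ ≤ (∑ i ∈ Finset.range n, L (q i)) + 1 := by
            rw [Finset.sum_range_succ]
            have := hnonneg _ (hq0 m)
            linarith
        _ = 1 + ∑ i ∈ Finset.range n, L (q i) := by ring
    have hnpos : (0:ℝ) < n := by positivity
    have hn1 : ((m:ℝ) + 1) = (n:ℝ) := by rw [hn]; push_cast; ring
    rw [div_lt_iff₀ (by linarith : (0:ℝ) < (m:ℝ)+1)] at hm
    nlinarith [hbound, mul_pos hnpos hε]
  -- Step 2: general continuous functions, by affine rescaling
  intro f
  set M : ℝ := ‖BoundedContinuousFunction.mkOfCompact f‖ + 1 with hM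
  have hMpos : 0 < M := add_pos_of_nonneg_of_pos (norm_nonneg _) one_pos
  have hfb : ∀ x, |f x| ≤ M - 1 := by
    intro x
    have := (BoundedContinuousFunction.mkOfCompact f).norm_coe_le_norm x
    simpa [hM] using this
  set g : C(X, ℝ) := (2*M)⁻¹ • (f + ContinuousMap.const X M) with hg
  have hg_app : ∀ x, g x = (2*M)⁻¹ * (f x + M) := fun x => rfl
  have h2M : (0:ℝ) < 2*M := by linarith
  have hg0 : ∀ x, 0 ≤ g x := by
    intro x
    have h := abs_le.mp (hfb x)
    rw [hg_app]
    exact mul_nonneg (inv_nonneg.mpr h2M.le) (by linarith [h.1])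
  have hg1 : ∀ x, g x ≤ 1 := by
    intro x
    have h := abs_le.mp (hfb x)
    rw [hg_app]
    calc (2*M)⁻¹ * (f x + M) ≤ (2*M)⁻¹ * (2*M) :=
          mul_le_mul_of_nonneg_left (by linarith [h.2]) (inv_nonneg.mpr h2M.le)
      _ = 1 := inv_mul_cancel₀ h2M.ne'
  have h1 := step1 g hg0 hg1
  have hgint : ∫ x, g x ∂μ = (2*M)⁻¹ * (∫ x, f x ∂μ + M) := by
    calc ∫ x, g x ∂μ = ∫ x, (2*M)⁻¹ * (f x + M) ∂μ :=
          integral_congr_ae (Filter.Eventually.of_forall fun x => hg_app x)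
      _ = (2*M)⁻¹ * ∫ x, (f x + M) ∂μ := integral_const_mul _ _
      _ = (2*M)⁻¹ * (∫ x, f x ∂μ + M) := by
          rw [integral_add (hint f) (integrable_const M), integral_const]
          simp [measure_univ]
  have hgL : L g = (2*M)⁻¹ * (L f + M) := by
    have : f + ContinuousMap.const X M = f + ContinuousMap.const X M := rfl
    rw [hg, hsmul, hadd, hconst]
  rw [hgint, hgL] at h1
  have h2 := (mul_le_mul_iff_right₀ (inv_pos.mpr h2M)).mp h1
  linarith

/-- The abstract "total first variation": `Φ(μ) = sup_{f ∈ F} ∫ f dμ ∈ [0, ∞]`,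
for a family `F` of continuous functions closed under negation (so the sup is
nonnegative, and taking `ENNReal.ofReal` of each integral does not change it). -/
noncomputable def Phi {X : Type*} [TopologicalSpace X] [MeasurableSpace X]
    (F : Set C(X, ℝ)) (μ : Measure X) : ℝ≥0∞ :=
  ⨆ f ∈ F, ENNReal.ofReal (∫ x, f x ∂μ)

lemma Phi_smul {X : Type*} [TopologicalSpace X] [MeasurableSpace X]
    (F : Set C(X, ℝ)) (μ : Measure X) (c : ℝ≥0∞) (hc : c ≠ ∞) :
    Phi F (c • μ) = c * Phi F μ := by
  unfold Phi
  rw [ENNReal.mul_iSup]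
  refine iSup_congr fun f => ?_
  rw [ENNReal.mul_iSup]
  refine iSup_congr fun hf => ?_
  rw [integral_smul_measure, smul_eq_mul, ENNReal.ofReal_mul ENNReal.toReal_nonneg,
    ENNReal.ofReal_toReal hc]

theorem stmt_1 {X : Type*} [MetricSpace X] [CompactSpace X]
    [MeasurableSpace X] [BorelSpace X]
    (F : Set C(X, ℝ)) (hF : F.Nonempty) (hFneg : ∀ f ∈ F, -f ∈ F) :
    ((∀ μ : Measure X, IsFiniteMeasure μ →
        (∀ f ∈ F, ∫ x, f x ∂μ = 0) → μ = 0) ↔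
      (∃ c : ℝ≥0, ∀ μ : Measure X, IsFiniteMeasure μ →
        μ Set.univ ≤ (c : ℝ≥0∞) * Phi F μ))
    ∧
    ((∃ φ : ℝ≥0 → ℝ≥0, Monotone φ ∧ φ 0 = 0 ∧
        ∀ μ : Measure X, IsFiniteMeasure μ → Phi F μ ≠ ∞ →
          μ Set.univ ≤ (φ (Phi F μ).toNNReal : ℝ≥0∞)) ↔
      (∃ c : ℝ≥0, ∀ μ : Measure X, IsFiniteMeasure μ →
        μ Set.univ ≤ (c : ℝ≥0∞) * Phi F μ)) := by
  have key : (∀ μ : Measure X, IsFiniteMeasure μ → (∀ f ∈ F, ∫ x, f x ∂μ = 0) → μ = 0) →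
      ∃ c : ℝ≥0, ∀ μ : Measure X, IsFiniteMeasure μ →
        μ Set.univ ≤ (c : ℝ≥0∞) * Phi F μ := by
    intro ha
    by_contra hcon
    push_neg at hcon
    have hbad : ∀ n : ℕ, ∃ ν : Measure X, IsProbabilityMeasure ν ∧
        ∀ f ∈ F, ∫ x, f x ∂ν ≤ ((n:ℝ)+1)⁻¹ := by
      intro n
      obtain ⟨μ, hfin, hgt⟩ := hcon (n+1 : ℝ≥0)
      haveI := hfin
      set cE : ℝ≥0∞ := (n:ℝ≥0∞) + 1 with hcEdef
      have hcoe : ((n+1 : ℝ≥0) : ℝ≥0∞) = cE := by push_cast; rfl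
      rw [hcoe] at hgt
      have hc0 : cE ≠ 0 := by simp [hcEdef]
      have hct : cE ≠ ∞ := by simp [hcEdef]
      have hM0 : μ Set.univ ≠ 0 := by
        intro h; rw [h] at hgt; exact (not_lt.mpr zero_le) hgt
      have hMt : μ Set.univ ≠ ∞ := measure_ne_top μ _
      have hP : Phi F μ ≠ ∞ := by
        intro h
        rw [h, ENNReal.mul_top hc0] at hgt
        exact (not_lt.mpr le_top) hgt
      refine ⟨(μ Set.univ)⁻¹ • μ, ⟨by
        rw [Measure.smul_apply, smul_eq_mul, ENNReal.inv_mul_cancel hM0 hMt]⟩, ?_⟩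
      intro f hf
      have h1 : cE * Phi F μ ≤ μ Set.univ := hgt.le
      have h2 : Phi F μ ≤ cE⁻¹ * μ Set.univ := by
        calc Phi F μ = cE⁻¹ * (cE * Phi F μ) := by
              rw [← mul_assoc, ENNReal.inv_mul_cancel hc0 hct, one_mul]
          _ ≤ cE⁻¹ * μ Set.univ := mul_le_mul_right h1 _
      have hb : (μ Set.univ)⁻¹ * Phi F μ ≤ cE⁻¹ := by
        calc (μ Set.univ)⁻¹ * Phi F μ
            ≤ (μ Set.univ)⁻¹ * (cE⁻¹ * μ Set.univ) := mul_le_mul_right h2 _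
          _ = cE⁻¹ * ((μ Set.univ)⁻¹ * μ Set.univ) := by ring
          _ = cE⁻¹ := by rw [ENNReal.inv_mul_cancel hM0 hMt, mul_one]
      have hcE : cE = ENNReal.ofReal ((n:ℝ)+1) := by
        rw [ENNReal.ofReal_add (Nat.cast_nonneg n) zero_le_one, ENNReal.ofReal_natCast,
          ENNReal.ofReal_one]
      have h5 : ENNReal.ofReal (∫ x, f x ∂((μ Set.univ)⁻¹ • μ))
          ≤ ENNReal.ofReal (((n:ℝ)+1)⁻¹) := by
        calc ENNReal.ofReal (∫ x, f x ∂((μ Set.univ)⁻¹ • μ))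
            ≤ Phi F ((μ Set.univ)⁻¹ • μ) := by
              rw [Phi]
              exact le_biSup
                (fun g : C(X,ℝ) => ENNReal.ofReal (∫ x, g x ∂((μ Set.univ)⁻¹ • μ))) hf
          _ = (μ Set.univ)⁻¹ * Phi F μ :=
              Phi_smul F μ _ (ENNReal.inv_ne_top.mpr hM0)
          _ ≤ cE⁻¹ := hb
          _ = ENNReal.ofReal (((n:ℝ)+1)⁻¹) := by
              rw [hcE, ← ENNReal.ofReal_inv_of_pos (by positivity)]
      by_cases hneg : ∫ x, f x ∂((μ Set.univ)⁻¹ • μ) ≤ 0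
      · exact hneg.trans (by positivity)
      · exact (ENNReal.ofReal_le_ofReal_iff (by positivity)).mp h5
    choose ν hν1 hν2 using hbad
    haveI : ∀ n, IsProbabilityMeasure (ν n) := hν1
    obtain ⟨u, hu⟩ := Ultrafilter.exists_le (atTop : Filter ℕ)
    have hintn : ∀ (f : C(X, ℝ)) (n : ℕ), Integrable (fun x => f x) (ν n) := fun f n =>
      (BoundedContinuousFunction.mkOfCompact f).integrable _
    have hLex : ∀ f : C(X, ℝ), ∃ l : ℝ,
        Tendsto (fun n => ∫ x, f x ∂(ν n)) (↑u) (𝓝 l) := by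
      intro f
      set bf := BoundedContinuousFunction.mkOfCompact f with hbf
      have hmem : ∀ n, (∫ x, f x ∂(ν n)) ∈ Set.Icc (-‖bf‖) ‖bf‖ := by
        intro n
        have h := BoundedContinuousFunction.norm_integral_le_norm (ν n) bf
        have h2 : |∫ x, f x ∂(ν n)| ≤ ‖bf‖ := by
          rw [← Real.norm_eq_abs]
          simpa [hbf] using h
        exact abs_le.mp h2
      have hle : ↑(Ultrafilter.map (fun n => ∫ x, f x ∂(ν n)) u)
          ≤ 𝓟 (Set.Icc (-‖bf‖) ‖bf‖) := by
        rw [Ultrafilter.coe_map]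
        exact Filter.le_principal_iff.mpr (Filter.mem_map.mpr
          (Filter.Eventually.of_forall hmem))
      obtain ⟨l, _, hl⟩ := isCompact_Icc.ultrafilter_le_nhds _ hle
      exact ⟨l, by rwa [Ultrafilter.coe_map] at hl⟩
    choose L hL using hLex
    have hadd : ∀ f g, L (f + g) = L f + L g := by
      intro f g
      have heq : ∀ n, ∫ x, (f+g) x ∂(ν n) = (∫ x, f x ∂(ν n)) + ∫ x, g x ∂(ν n) := by
        intro n
        simp only [ContinuousMap.add_apply]
        exact integral_add (hintn f n) (hintn g n)
      exact tendsto_nhds_unique (hL (f+g))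
        (((hL f).add (hL g)).congr fun n => (heq n).symm)
    have hsmul : ∀ (c : ℝ) (f : C(X, ℝ)), L (c • f) = c * L f := by
      intro c f
      have heq : ∀ n, ∫ x, (c • f) x ∂(ν n) = c * ∫ x, f x ∂(ν n) := by
        intro n
        simp only [ContinuousMap.smul_apply, smul_eq_mul]
        exact integral_const_mul c _
      exact tendsto_nhds_unique (hL (c • f))
        (((hL f).const_mul c).congr fun n => (heq n).symm)
    have hmono : ∀ f g : C(X, ℝ), (∀ x, f x ≤ g x) → L f ≤ L g := by
      intro f g hfg
      exact le_of_tendsto_of_tendsto' (hL f) (hL g)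
        (fun n => integral_mono (hintn f n) (hintn g n) hfg)
    have hone : L (ContinuousMap.const X 1) = 1 := by
      have heq : ∀ n, ∫ x, (ContinuousMap.const X (1:ℝ)) x ∂(ν n) = (1:ℝ) := by
        intro n
        simp only [ContinuousMap.const_apply]
        rw [integral_const, probReal_univ]
        simp
      exact tendsto_nhds_unique (hL _) (tendsto_const_nhds.congr fun n => (heq n).symm)
    have hLF : ∀ f ∈ F, L f ≤ 0 := by
      intro f hf
      have hb : Tendsto (fun n : ℕ => ((n:ℝ)+1)⁻¹) (↑u) (𝓝 0) := by
        refine Tendsto.mono_left ?_ hu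
        simpa only [one_div] using tendsto_one_div_add_atTop_nhds_zero_nat (𝕜 := ℝ)
      exact le_of_tendsto_of_tendsto' (hL f) hb (fun n => hν2 n f hf)
    obtain ⟨μ, hμprob, hμle⟩ := riesz_lite L hadd hsmul hmono hone
    haveI := hμprob
    have hzero : ∀ f ∈ F, ∫ x, f x ∂μ = 0 := by
      intro f hf
      have h1 : ∫ x, f x ∂μ ≤ 0 := (hμle f).trans (hLF f hf)
      have h2 : ∫ x, (-f) x ∂μ ≤ 0 := (hμle (-f)).trans (hLF (-f) (hFneg f hf))
      have h3 : -∫ x, f x ∂μ ≤ 0 := by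
        rw [← integral_neg]
        simpa using h2
      linarith
    have := ha μ inferInstance hzero
    have h4 := hμprob.measure_univ
    rw [this] at h4
    simp at h4
  refine ⟨⟨key, ?_⟩, ⟨?_, ?_⟩⟩
  · rintro ⟨c, hc⟩ μ hfin hzero
    haveI := hfin
    have hPhi : Phi F μ = 0 := by
      refine le_antisymm (iSup₂_le fun f hf => ?_) zero_le
      rw [hzero f hf]; simp
    have h := hc μ hfin
    rw [hPhi, mul_zero, le_zero_iff] at h
    exact Measure.measure_univ_eq_zero.mp h
  · rintro ⟨φ, hφm, hφ0, hφ⟩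
    refine ⟨φ 1 + 1, fun μ hfin => ?_⟩
    haveI := hfin
    by_cases hP : Phi F μ = ∞
    · rw [hP, ENNReal.mul_top (by simp)]
      exact le_top
    by_cases hP0 : Phi F μ = 0
    · have h := hφ μ hfin (by rw [hP0]; exact ENNReal.zero_ne_top)
      rw [hP0] at h
      simp only [ENNReal.toNNReal_zero, hφ0, ENNReal.coe_zero, le_zero_iff] at h
      rw [h]
      exact zero_le
    · set m : Measure X := (Phi F μ)⁻¹ • μ with hm
      haveI : IsFiniteMeasure m := ⟨by
        rw [hm, Measure.smul_apply, smul_eq_mul]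
        exact ENNReal.mul_lt_top (ENNReal.inv_lt_top.mpr (pos_iff_ne_zero.mpr hP0))
          (measure_lt_top μ _)⟩
      have hPm : Phi F m = 1 := by
        rw [hm, Phi_smul F μ _ (ENNReal.inv_ne_top.mpr hP0), ENNReal.inv_mul_cancel hP0 hP]
      have h2 := hφ m inferInstance (by rw [hPm]; exact ENNReal.one_ne_top)
      rw [hPm] at h2
      have h3 : (Phi F μ)⁻¹ * μ Set.univ ≤ (φ 1 : ℝ≥0∞) := by
        simpa [hm, Measure.smul_apply, smul_eq_mul] using h2
      calc μ Set.univ = Phi F μ * ((Phi F μ)⁻¹ * μ Set.univ) := by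
            rw [← mul_assoc, ENNReal.mul_inv_cancel hP0 hP, one_mul]
        _ ≤ Phi F μ * (φ 1 : ℝ≥0∞) := mul_le_mul_right h3 _
        _ ≤ ((φ 1 + 1 : ℝ≥0) : ℝ≥0∞) * Phi F μ := by
            rw [mul_comm]
            exact mul_le_mul_left (by
              rw [ENNReal.coe_add]; exact le_self_add) _
  · rintro ⟨c, hc⟩
    refine ⟨fun t => c * t, fun a b hab => mul_le_mul_right hab c, mul_zero c, ?_⟩
    intro μ hfin hP
    calc μ Set.univ ≤ (c:ℝ≥0∞) * Phi F μ := hc μ hfin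
      _ = ((c * (Phi F μ).toNNReal : ℝ≥0) : ℝ≥0∞) := by
          rw [ENNReal.coe_mul, ENNReal.coe_toNNReal hP]
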